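/- The sets 𝐑_min and 𝐍𝐑 are finite; indeed every 𝐦 ∈ 𝐑_min ∪ 𝐍𝐑 satisfies ‖𝐦‖ ≤ M. -/
import Mathlib


open scoped BigOperators

/-- The dot product 𝐦·λ = Σⱼ (m₊ⱼ − m₋ⱼ)λⱼ. -/
def mdot {N : ℕ} (lam : Fin N → ℝ) (m : (Fin N → ℕ) × (Fin N → ℕ)) : ℝ :=
  ∑ j, ((m.1 j : ℝ) - (m.2 j : ℝ)) * lam j

/-- The norm ‖𝐦‖ = Σⱼ (m₊ⱼ + m₋ⱼ). -/
def mnorm {N : ℕ} (m : (Fin N → ℕ) × (Fin N → ℕ)) : ℕ :=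
  ∑ j, (m.1 j + m.2 j)

/-- The relation 𝐧 ≺ 𝐦. -/
def prec {N : ℕ} (n m : (Fin N → ℕ) × (Fin N → ℕ)) : Prop :=
  (∀ j, n.1 j + n.2 j ≤ m.1 j + m.2 j) ∧ mnorm n < mnorm m

/-- The resonant set 𝐑 = {𝐦 : |𝐦·λ| > m}. -/
def Rset {N : ℕ} (lam : Fin N → ℝ) (mass : ℝ) : Set ((Fin N → ℕ) × (Fin N → ℕ)) :=
  {m | |mdot lam m| > mass}

/-- The minimal resonant set 𝐑_min. -/
def Rmin {N : ℕ} (lam : Fin N → ℝ) (mass : ℝ) : Set ((Fin N → ℕ) × (Fin N → ℕ)) :=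
  {m | m ∈ Rset lam mass ∧ ∀ n ∈ Rset lam mass, ¬ prec n m}

/-- The set 𝐈 = {𝐦 : ∃ 𝐧 ∈ 𝐑_min, 𝐧 ≺ 𝐦}. -/
def Iset {N : ℕ} (lam : Fin N → ℝ) (mass : ℝ) : Set ((Fin N → ℕ) × (Fin N → ℕ)) :=
  {m | ∃ n ∈ Rmin lam mass, prec n m}

/-- The non-resonant set 𝐍𝐑 = ℕ₀^{2N} ∖ (𝐑_min ∪ 𝐈). -/
def NRset {N : ℕ} (lam : Fin N → ℝ) (mass : ℝ) : Set ((Fin N → ℕ) × (Fin N → ℕ)) :=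
  (Rmin lam mass ∪ Iset lam mass)ᶜ

lemma exists_sub_sum {N : ℕ} (s : Fin N → ℕ) :
    ∀ M : ℕ, M ≤ ∑ j, s j → ∃ t : Fin N → ℕ, (∀ j, t j ≤ s j) ∧ ∑ j, t j = M := by
  intro M
  induction M with
  | zero => intro _; exact ⟨fun _ => 0, fun j => Nat.zero_le _, by simp⟩
  | succ M ih =>
    intro h
    obtain ⟨t, ht, hts⟩ := ih (le_of_lt (Nat.lt_of_succ_le h))
    have hlt : ∑ j, t j < ∑ j, s j := by omega
    have : ∃ j, t j < s j := by
      by_contra hc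
      push_neg at hc
      exact absurd (Finset.sum_le_sum (fun j _ => hc j)) (not_le.mpr hlt)
    obtain ⟨j, hj⟩ := this
    refine ⟨Function.update t j (t j + 1), ?_, ?_⟩
    · intro k
      rcases eq_or_ne k j with rfl | hk
      · simpa using hj
      · simp [Function.update_of_ne hk, ht k]
    · rw [Finset.sum_update_of_mem (Finset.mem_univ j)]
      rw [Finset.sum_eq_add_sum_sdiff_singleton_of_mem (Finset.mem_univ j) t] at hts
      omega

lemma prec_trans {N : ℕ} {a b c : (Fin N → ℕ) × (Fin N → ℕ)} (h1 : prec a b) (h2 : prec b c) :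
    prec a c :=
  ⟨fun j => le_trans (h1.1 j) (h2.1 j), lt_trans h1.2 h2.2⟩

lemma exists_rmin {N : ℕ} (lam : Fin N → ℝ) (mass : ℝ) :
    ∀ d n, mnorm n ≤ d → n ∈ Rset lam mass →
      ∃ k ∈ Rmin lam mass, k = n ∨ prec k n := by
  intro d
  induction d with
  | zero =>
    intro n hd hn
    refine ⟨n, ⟨hn, fun k _ hk => ?_⟩, Or.inl rfl⟩
    exact absurd hk.2 (by omega)
  | succ d ih =>
    intro n hd hn
    by_cases hmin : ∀ k ∈ Rset lam mass, ¬ prec k n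
    · exact ⟨n, ⟨hn, hmin⟩, Or.inl rfl⟩
    · push_neg at hmin
      obtain ⟨k, hk, hkn⟩ := hmin
      obtain ⟨r, hr, hrk⟩ := ih k (by have := hkn.2; omega) hk
      refine ⟨r, hr, Or.inr ?_⟩
      rcases hrk with rfl | hrk
      · exact hkn
      · exact prec_trans hrk hkn

/-- 𝐑_min and 𝐍𝐑 are finite: every element of 𝐑_min ∪ 𝐍𝐑 has norm ≤ M. -/
theorem Rmin_union_NR_finite {N : ℕ} (hN : 0 < N) (lam : Fin N → ℝ) (mass : ℝ)
    (hmass : 0 < mass)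
    (hpos : ∀ j, 0 < lam j)
    (hmono : StrictMono lam)
    (hlt : ∀ j, lam j < mass)
    (M : ℕ)
    (hM1 : ((M : ℝ) - 1) * lam ⟨0, hN⟩ < mass)
    (hM2 : mass ≤ (M : ℝ) * lam ⟨0, hN⟩)
    (hgen : ∀ m : (Fin N → ℕ) × (Fin N → ℕ), mnorm m ≤ M → (mdot lam m) ^ 2 ≠ mass ^ 2) :
    (Rmin lam mass ∪ NRset lam mass).Finite ∧
      ∀ m ∈ Rmin lam mass ∪ NRset lam mass, mnorm m ≤ M := by
  -- key: every m with M < mnorm m lies above some element of Rmin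
  have key : ∀ m : (Fin N → ℕ) × (Fin N → ℕ), M < mnorm m →
      ∃ k ∈ Rmin lam mass, prec k m := by
    intro m hm
    obtain ⟨t, ht, hts⟩ := exists_sub_sum (fun j => m.1 j + m.2 j) M (le_of_lt hm)
    set n : (Fin N → ℕ) × (Fin N → ℕ) := (t, fun _ => 0) with hn
    have hnnorm : mnorm n = M := by simpa [mnorm, hn] using hts
    have hdot : mass ≤ mdot lam n := by
      calc mass ≤ (M : ℝ) * lam ⟨0, hN⟩ := hM2
        _ = ∑ j, (t j : ℝ) * lam ⟨0, hN⟩ := by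
            rw [← Finset.sum_mul]; norm_cast; rw [hts]
        _ ≤ ∑ j, (t j : ℝ) * lam j := by
            apply Finset.sum_le_sum
            intro j _
            have : lam ⟨0, hN⟩ ≤ lam j := hmono.monotone (by simp [Fin.le_def])
            exact mul_le_mul_of_nonneg_left this (by positivity)
        _ = mdot lam n := by simp [mdot, hn]
    have hneq : (mdot lam n)^2 ≠ mass^2 := hgen n (le_of_eq hnnorm)
    have hnR : n ∈ Rset lam mass := by
      have : mass < mdot lam n := lt_of_le_of_ne hdot (by
        intro h; exact hneq (by rw [← h]))
      have : mass < |mdot lam n| := lt_of_lt_of_le this (le_abs_self _)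
      exact this
    have hprec : prec n m := by
      constructor
      · intro j; simpa [hn] using ht j
      · omega
    obtain ⟨k, hk, hkn⟩ := exists_rmin lam mass (mnorm n) n le_rfl hnR
    refine ⟨k, hk, ?_⟩
    rcases hkn with rfl | hkn
    · exact hprec
    · exact prec_trans hkn hprec
  have bound : ∀ m ∈ Rmin lam mass ∪ NRset lam mass, mnorm m ≤ M := by
    intro m hm
    by_contra hc
    push_neg at hc
    obtain ⟨k, hk, hkm⟩ := key m hc
    rcases hm with hm | hm
    · exact hm.2 k hk.1 hkm
    · exact hm (Or.inr ⟨k, hk, hkm⟩)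
  refine ⟨?_, bound⟩
  have hfin : ((Set.univ.pi fun _ : Fin N => Set.Iic M) ×ˢ
      (Set.univ.pi fun _ : Fin N => Set.Iic M)).Finite :=
    Set.Finite.prod (Set.Finite.pi fun _ => Set.finite_Iic M)
      (Set.Finite.pi fun _ => Set.finite_Iic M)
  apply hfin.subset
  intro m hm
  have hb := bound m hm
  have hle : ∀ j, m.1 j + m.2 j ≤ M := fun j =>
    le_trans (Finset.single_le_sum (f := fun j => m.1 j + m.2 j) (fun _ _ => Nat.zero_le _)
      (Finset.mem_univ j)) hb
  constructor <;> intro j _ <;> have := hle j <;> simp only [Set.mem_Iic] <;> omega
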